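/- Let K be a field, V a finite-dimensional K-vector space, and f : V → V a bijective K-linear endomorphism that is diagonalizable, i.e., the eigenspaces of f span V. For each μ ∈ K let a_μ denote the dimension of the μ-eigenspace of f. Then for every t ∈ K, the t-eigenspace of the induced endomorphism ⋀²f of the exterior square ⋀²V satisfies 2 · dim (t-eigenspace of ⋀²f) ≤ ∑_μ a_μ² (the sum over the finitely many eigenvalues μ of f). -/

import Mathlib

/-- The linear map between `n`-th exterior powers induced functorially by a linear map
`f : M →ₗ[R] N` (the restriction of `ExteriorAlgebra.map f`). -/
noncomputable def exteriorPower.mapInduced {R M N : Type*} [CommRing R] [AddCommGroup M] [Module R M]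
    [AddCommGroup N] [Module R N] (n : ℕ) (f : M →ₗ[R] N) :
    ⋀[R]^n M →ₗ[R] ⋀[R]^n N :=
  have key : ∀ m : ℕ, Submodule.map (ExteriorAlgebra.map f).toLinearMap (⋀[R]^m M) ≤ ⋀[R]^m N := by
    intro m
    rw [Submodule.map_pow, ExteriorAlgebra.ι_range_map_map]
    have h1 : Submodule.map (ExteriorAlgebra.ι R) (LinearMap.range f)
        ≤ LinearMap.range (ExteriorAlgebra.ι R (M := N)) := LinearMap.map_le_range
    induction m with
    | zero => simp
    | succ m ih =>
        calc Submodule.map (ExteriorAlgebra.ι R) (LinearMap.range f) ^ (m + 1)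
            = Submodule.map (ExteriorAlgebra.ι R) (LinearMap.range f) ^ m *
              Submodule.map (ExteriorAlgebra.ι R) (LinearMap.range f) := pow_succ _ m
          _ ≤ LinearMap.range (ExteriorAlgebra.ι R (M := N)) ^ m *
              LinearMap.range (ExteriorAlgebra.ι R (M := N)) := mul_le_mul' ih h1
          _ = ⋀[R]^(m + 1) N := (pow_succ _ m).symm
  (ExteriorAlgebra.map f).toLinearMap.restrict
    fun x hx => key n (Submodule.mem_map_of_mem hx)

private lemma nat_two_mul_mul_le (x y : ℕ) : 2 * (x * y) ≤ x ^ 2 + y ^ 2 := by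
  zify; nlinarith [sq_nonneg ((x : ℤ) - y)]

/-- If an endomorphism admits a spanning family of eigenvectors, then the dimension of any
eigenspace is at most the number of family members with that eigenvalue. -/
private lemma eigen_dim_le {K W : Type*} [Field K] [AddCommGroup W] [Module K W]
    [FiniteDimensional K W] (g : Module.End K W) {ι : Type*} [Fintype ι]
    (w : ι → W) (lam : ι → K)
    (hw : ∀ i, g (w i) = lam i • w i)
    (hspan : Submodule.span K (Set.range w) = ⊤) (t : K)
    [DecidablePred fun i => lam i = t] :
    Module.finrank K (Module.End.eigenspace g t) ≤
      (Finset.univ.filter fun i => lam i = t).card := by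
  classical
  set S : K → Submodule K W := fun c => Submodule.span K (w '' {i | lam i = c}) with hS
  have hSE : ∀ c, S c ≤ g.eigenspace c := by
    intro c
    rw [Submodule.span_le]
    rintro _ ⟨i, hi, rfl⟩
    have hic : lam i = c := hi
    rw [SetLike.mem_coe, Module.End.mem_eigenspace_iff, hw i, hic]
  have hSup : ⨆ c, S c = ⊤ := by
    rw [eq_top_iff, ← hspan, Submodule.span_le]
    rintro _ ⟨i, rfl⟩
    exact SetLike.le_def.mp (le_iSup S (lam i)) (Submodule.subset_span ⟨i, rfl, rfl⟩)
  have hEt : g.eigenspace t = S t := by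
    have hsplit : (⨆ c, S c) = (⨆ c, ⨆ _ : c = t, S c) ⊔ ⨆ c, ⨆ _ : ¬ c = t, S c :=
      iSup_split S fun c => c = t
    have hleft : (⨆ c, ⨆ _ : c = t, S c) = S t := by simp
    have h1 : S t ⊔ (⨆ c, ⨆ _ : ¬ c = t, S c) = ⊤ := by rw [← hleft, ← hsplit, hSup]
    have h2 : (⨆ c, ⨆ _ : ¬ c = t, S c) ⊓ g.eigenspace t = ⊥ := by
      have hle : (⨆ c, ⨆ _ : ¬ c = t, S c) ≤ ⨆ c, ⨆ _ : c ≠ t, g.eigenspace c :=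
        iSup_mono fun c => iSup_mono' fun h => ⟨h, hSE c⟩
      have hdisj := (Module.End.eigenspaces_iSupIndep g t).symm
      exact le_bot_iff.mp (le_trans (inf_le_inf_right _ hle) hdisj.le_bot)
    calc g.eigenspace t = ⊤ ⊓ g.eigenspace t := (top_inf_eq _).symm
      _ = (S t ⊔ (⨆ c, ⨆ _ : ¬ c = t, S c)) ⊓ g.eigenspace t := by rw [h1]
      _ = S t ⊔ ((⨆ c, ⨆ _ : ¬ c = t, S c) ⊓ g.eigenspace t) :=
          sup_inf_assoc_of_le _ (hSE t)
      _ = S t := by rw [h2, sup_bot_eq]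
  have himg : w '' {i | lam i = t}
      = ↑(((Finset.univ.filter fun i => lam i = t)).image w) := by
    ext x
    simp [eq_comm]
  rw [hEt]
  show Module.finrank K ↥(Submodule.span K (w '' {i | lam i = t})) ≤ _
  rw [himg]
  have h5 := finrank_span_finset_le_card (R := K)
    ((Finset.univ.filter fun i => lam i = t).image w)
  unfold Set.finrank at h5
  exact le_trans h5 Finset.card_image_le

/-- Let `f` be a bijective diagonalizable endomorphism of a finite-dimensional `K`-vector
space `V`, with eigenvalues exactly the elements of the finite set `s`, and let `a_μ` be the
dimension of the `μ`-eigenspace of `f`. Then for every `t : K`, the `t`-eigenspace of the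
induced endomorphism `⋀²f` of `⋀²V` satisfies `2 · dim ≤ ∑_μ a_μ²`. -/
theorem stmt4 {K V : Type*} [Field K] [AddCommGroup V] [Module K V] [FiniteDimensional K V]
    (f : Module.End K V) (hf : Function.Bijective f)
    (hdiag : (⨆ μ : K, f.eigenspace μ) = ⊤)
    (s : Finset K) (hs : ∀ μ : K, f.HasEigenvalue μ ↔ μ ∈ s) (t : K) :
    2 * Module.finrank K (Module.End.eigenspace (exteriorPower.mapInduced 2 f) t) ≤
      ∑ μ ∈ s, Module.finrank K (f.eigenspace μ) ^ 2 := by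
  classical
  -- build an eigenbasis of V
  obtain ⟨n, b, μfun, hfb⟩ : ∃ (n : ℕ) (b : Module.Basis (Fin n) K V) (μfun : Fin n → K),
      ∀ i, f (b i) = μfun i • b i := by
    have hint : DirectSum.IsInternal f.eigenspace :=
      DirectSum.isInternal_submodule_of_iSupIndep_of_iSup_eq_top f.eigenspaces_iSupIndep hdiag
    let v : ∀ μ : K, Module.Basis (Fin (Module.finrank K (f.eigenspace μ))) K (f.eigenspace μ) :=
      fun μ => Module.finBasis K _
    let b0 := hint.collectedBasis v
    haveI : Fintype (Σ μ : K, Fin (Module.finrank K (f.eigenspace μ))) :=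
      FiniteDimensional.fintypeBasisIndex b0
    let e := Fintype.equivFin (Σ μ : K, Fin (Module.finrank K (f.eigenspace μ)))
    refine ⟨_, b0.reindex e, fun i => (e.symm i).1, fun i => ?_⟩
    have hmem : b0 (e.symm i) ∈ f.eigenspace (e.symm i).1 := hint.collectedBasis_mem v _
    have hb : b0.reindex e i = b0 (e.symm i) := b0.reindex_apply e i
    rw [hb]
    exact Module.End.mem_eigenspace_iff.1 hmem
  have hμs : ∀ i, μfun i ∈ s := by
    intro i
    refine (hs _).1 (Module.End.hasEigenvalue_of_hasEigenvector ⟨?_, b.ne_zero i⟩)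
    exact Module.End.mem_eigenspace_iff.2 (hfb i)
  have h0s : (0 : K) ∉ s := by
    intro h0
    have h1 : f.HasEigenvalue 0 := (hs 0).2 h0
    have h2 : f.eigenspace 0 = ⊥ := by
      rw [Module.End.eigenspace_zero]
      exact LinearMap.ker_eq_bot.2 hf.1
    exact h1 h2
  -- the eigenvector family of the second exterior power
  set P : Type _ := {p : Fin n × Fin n // p.1 < p.2} with hP
  have hωmem : ∀ p : P, ExteriorAlgebra.ιMulti K 2 ![b p.1.1, b p.1.2] ∈ ⋀[K]^2 V :=
    fun p => ExteriorAlgebra.ιMulti_range K 2 ⟨_, rfl⟩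
  set ω : P → ↥(⋀[K]^2 V) := fun p => ⟨_, hωmem p⟩ with hω
  set lam : P → K := fun p => μfun p.1.1 * μfun p.1.2 with hlam
  set g : Module.End K ↥(⋀[K]^2 V) := exteriorPower.mapInduced 2 f with hg
  -- ω p is an eigenvector of g with eigenvalue lam p
  have hcoe : ∀ x : ↥(⋀[K]^2 V), (g x : ExteriorAlgebra K V) = ExteriorAlgebra.map f x := by
    intro x; rfl
  have hgω : ∀ p : P, g (ω p) = lam p • ω p := by
    rintro ⟨⟨i, j⟩, hij⟩
    apply Subtype.ext
    rw [hcoe]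
    show (ExteriorAlgebra.map f) (ExteriorAlgebra.ιMulti K 2 ![b i, b j])
        = (μfun i * μfun j) • ExteriorAlgebra.ιMulti K 2 ![b i, b j]
    rw [ExteriorAlgebra.map_apply_ιMulti]
    have h1 : f ∘ ![b i, b j] = fun k => (![μfun i, μfun j] k) • (![b i, b j] k) := by
      funext k; fin_cases k <;> simp [hfb]
    rw [h1]
    have h2 := MultilinearMap.map_smul_univ
      (ExteriorAlgebra.ιMulti K 2).toMultilinearMap ![μfun i, μfun j] ![b i, b j]
    simp only [AlternatingMap.coe_multilinearMap] at h2
    rw [h2, Fin.prod_univ_two]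
    simp
  -- the family ω spans ⋀²V
  have hspanEA : Submodule.span K
      (Set.range (fun p : P => ExteriorAlgebra.ιMulti K 2 ![b p.1.1, b p.1.2])) = ⋀[K]^2 V := by
    apply le_antisymm
    · rw [Submodule.span_le]
      rintro _ ⟨p, rfl⟩
      exact hωmem p
    · rw [← ExteriorAlgebra.ιMulti_span_fixedDegree, Submodule.span_le]
      rintro _ ⟨w, rfl⟩
      have hv : w = fun k => ∑ i : Fin n, b.repr (w k) i • b i := by
        funext k; exact (b.sum_repr (w k)).symm
      have hexp : ExteriorAlgebra.ιMulti K 2 w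
          = ∑ r : Fin 2 → Fin n, (∏ k, b.repr (w k) (r k)) •
              ExteriorAlgebra.ιMulti K 2 (fun k => b (r k)) := by
        conv_lhs => rw [hv]
        have h3 := MultilinearMap.map_sum (ExteriorAlgebra.ιMulti K 2 (M := V)).toMultilinearMap
          (g := fun k i => b.repr (w k) i • b i)
        simp only [AlternatingMap.coe_multilinearMap] at h3
        rw [h3]
        refine Finset.sum_congr rfl fun r _ => ?_
        have h4 := MultilinearMap.map_smul_univ
          (ExteriorAlgebra.ιMulti K 2 (M := V)).toMultilinearMap
          (fun k => b.repr (w k) (r k)) (fun k => b (r k))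
        simp only [AlternatingMap.coe_multilinearMap] at h4
        rw [h4]
      rw [SetLike.mem_coe, hexp]
      apply Submodule.sum_mem
      intro r _
      apply Submodule.smul_mem
      rcases lt_trichotomy (r 0) (r 1) with h | h | h
      · have heq : (fun k => b (r k)) = ![b (r 0), b (r 1)] := by
          funext k; fin_cases k <;> rfl
        rw [heq]
        exact Submodule.subset_span ⟨⟨(r 0, r 1), h⟩, rfl⟩
      · have h0 : ((ExteriorAlgebra.ιMulti K 2) fun k => b (r k)) = 0 :=
          AlternatingMap.map_eq_zero_of_eq _ (fun k => b (r k)) (i := 0) (j := 1)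
            (show b (r 0) = b (r 1) by rw [h]) (by decide : (0 : Fin 2) ≠ 1)
        rw [h0]
        exact Submodule.zero_mem _
      · have hswap : (fun k => b (r k)) = ![b (r 1), b (r 0)] ∘ Equiv.swap 0 1 := by
          funext k; fin_cases k <;> simp
        rw [hswap, AlternatingMap.map_swap _ _ (by decide : (0 : Fin 2) ≠ 1)]
        exact Submodule.neg_mem _
          (Submodule.subset_span ⟨⟨(r 1, r 0), h⟩, rfl⟩)
  have hspanω : Submodule.span K (Set.range ω) = ⊤ := by
    apply Submodule.map_injective_of_injective (Submodule.injective_subtype (⋀[K]^2 V))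
    rw [Submodule.map_span, Submodule.map_subtype_top]
    have himg : (⋀[K]^2 V).subtype '' (Set.range ω)
        = Set.range (fun p : P => ExteriorAlgebra.ιMulti K 2 ![b p.1.1, b p.1.2]) := by
      rw [← Set.range_comp]; rfl
    rw [himg, hspanEA]
  haveI : Module.Finite K ↥(⋀[K]^2 V) := by
    rw [Module.finite_def]
    exact ⟨(Set.finite_range ω).toFinset, by rw [Set.Finite.coe_toFinset]; exact hspanω⟩
  have hdim := eigen_dim_le g ω lam hgω hspanω t
  -- counting
  set a : K → ℕ := fun c => (Finset.univ.filter fun i : Fin n => μfun i = c).card with ha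
  set P₁ : Finset (Fin n × Fin n) :=
    Finset.univ.filter (fun q => q.1 < q.2 ∧ μfun q.1 * μfun q.2 = t) with hP₁
  set P₂ : Finset (Fin n × Fin n) :=
    Finset.univ.filter (fun q => q.2 < q.1 ∧ μfun q.1 * μfun q.2 = t) with hP₂
  set R : Finset (Fin n × Fin n) :=
    Finset.univ.filter (fun q => μfun q.1 * μfun q.2 = t) with hR
  have hc1 : (Finset.univ.filter fun p : P => lam p = t).card = P₁.card := by
    apply Finset.card_bij (fun p _ => p.1)
    · rintro ⟨⟨i, j⟩, hij⟩ hp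
      rw [Finset.mem_filter] at hp ⊢
      exact ⟨Finset.mem_univ _, hij, hp.2⟩
    · rintro p₁ _ p₂ _ h
      exact Subtype.ext h
    · intro q hq
      rw [Finset.mem_filter] at hq
      exact ⟨⟨q, hq.2.1⟩, Finset.mem_filter.2 ⟨Finset.mem_univ _, hq.2.2⟩, rfl⟩
  have hc2 : P₂.card = P₁.card := by
    apply Finset.card_bij (fun q _ => q.swap)
    · rintro ⟨i, j⟩ hq
      rw [Finset.mem_filter] at hq ⊢
      exact ⟨Finset.mem_univ _, hq.2.1, by rw [← hq.2.2]; exact mul_comm _ _⟩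
    · rintro q₁ _ q₂ _ h
      exact Prod.swap_injective h
    · rintro ⟨i, j⟩ hq
      rw [Finset.mem_filter] at hq
      exact ⟨(j, i), Finset.mem_filter.2 ⟨Finset.mem_univ _,
        hq.2.1, by rw [← hq.2.2]; exact mul_comm _ _⟩, rfl⟩
  have hdisj : Disjoint P₁ P₂ := by
    rw [Finset.disjoint_left]
    rintro q h1 h2
    rw [Finset.mem_filter] at h1 h2
    exact absurd h2.2.1 (lt_asymm h1.2.1)
  have hsub : P₁ ∪ P₂ ⊆ R := by
    intro q hq
    rw [Finset.mem_union, Finset.mem_filter, Finset.mem_filter] at hq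
    rw [Finset.mem_filter]
    rcases hq with h | h
    · exact ⟨h.1, h.2.2⟩
    · exact ⟨h.1, h.2.2⟩
  have h2N : 2 * P₁.card ≤ R.card := by
    rw [two_mul]
    calc P₁.card + P₁.card = P₁.card + P₂.card := by rw [hc2]
      _ = (P₁ ∪ P₂).card := (Finset.card_union_of_disjoint hdisj).symm
      _ ≤ R.card := Finset.card_le_card hsub
  have hRsum : R.card = ∑ c ∈ s, a c * a (c⁻¹ * t) := by
    rw [Finset.card_eq_sum_card_fiberwise (f := fun q : Fin n × Fin n => μfun q.1) (t := s)
      (fun q _ => hμs q.1)]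
    refine Finset.sum_congr rfl fun c hcs => ?_
    have hc0 : c ≠ 0 := fun h => h0s (h ▸ hcs)
    have hfib : R.filter (fun q => μfun q.1 = c)
        = (Finset.univ.filter fun i : Fin n => μfun i = c) ×ˢ
          (Finset.univ.filter fun i : Fin n => μfun i = c⁻¹ * t) := by
      ext q
      simp only [hR, Finset.mem_filter, Finset.mem_product, Finset.mem_univ, true_and]
      constructor
      · rintro ⟨hmul, h1⟩
        refine ⟨h1, ?_⟩
        rw [h1] at hmul
        rw [← hmul, inv_mul_cancel_left₀ hc0]
      · rintro ⟨h1, h2⟩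
        exact ⟨by rw [h1, h2, mul_inv_cancel_left₀ hc0], h1⟩
    rw [hfib, Finset.card_product]
  have ha0 : ∀ c, c ∉ s → a c = 0 := by
    intro c hcs
    rw [ha]
    rw [Finset.card_eq_zero, Finset.filter_eq_empty_iff]
    intro i _ h
    exact hcs (h ▸ hμs i)
  have hσ : ∑ c ∈ s, a (c⁻¹ * t) ^ 2 ≤ ∑ c ∈ s, a c ^ 2 := by
    by_cases ht : t = 0
    · have hz : ∀ c ∈ s, a (c⁻¹ * t) ^ 2 = 0 := by
        intro c _
        rw [ht, mul_zero, ha0 0 h0s]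
        norm_num
      rw [Finset.sum_congr rfl hz]
      simp
    · have hinj : ∀ x ∈ s, ∀ y ∈ s, x⁻¹ * t = y⁻¹ * t → x = y := by
        intro x hx y hy hxy
        have hx0 : x ≠ 0 := fun h => h0s (h ▸ hx)
        have hy0 : y ≠ 0 := fun h => h0s (h ▸ hy)
        have := mul_right_cancel₀ ht hxy
        exact inv_injective this
      have himg2 : ∑ d ∈ s.image (fun c => c⁻¹ * t), a d ^ 2 = ∑ c ∈ s, a (c⁻¹ * t) ^ 2 :=
        Finset.sum_image hinj
      rw [← himg2]
      have hz : ∀ d ∈ s.image (fun c => c⁻¹ * t), a d ^ 2 ≠ 0 → d ∈ s := by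
        intro d _ hd
        by_contra hds
        rw [ha0 d hds] at hd
        norm_num at hd
      calc ∑ d ∈ s.image (fun c => c⁻¹ * t), a d ^ 2
          = ∑ d ∈ (s.image (fun c => c⁻¹ * t)).filter (· ∈ s), a d ^ 2 :=
            (Finset.sum_filter_of_ne hz).symm
        _ ≤ ∑ d ∈ s, a d ^ 2 :=
            Finset.sum_le_sum_of_subset (fun d hd => (Finset.mem_filter.1 hd).2)
  have hprod : ∑ c ∈ s, a c * a (c⁻¹ * t) ≤ ∑ c ∈ s, a c ^ 2 := by
    have h2 : 2 * ∑ c ∈ s, a c * a (c⁻¹ * t) ≤ 2 * ∑ c ∈ s, a c ^ 2 := by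
      rw [Finset.mul_sum]
      calc ∑ c ∈ s, 2 * (a c * a (c⁻¹ * t))
          ≤ ∑ c ∈ s, (a c ^ 2 + a (c⁻¹ * t) ^ 2) :=
            Finset.sum_le_sum fun c _ => nat_two_mul_mul_le _ _
        _ = ∑ c ∈ s, a c ^ 2 + ∑ c ∈ s, a (c⁻¹ * t) ^ 2 := Finset.sum_add_distrib
        _ ≤ ∑ c ∈ s, a c ^ 2 + ∑ c ∈ s, a c ^ 2 := by
            exact Nat.add_le_add_left hσ _
        _ = 2 * ∑ c ∈ s, a c ^ 2 := (two_mul _).symm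
    omega
  have hac : ∀ c, a c ≤ Module.finrank K (f.eigenspace c) := by
    intro c
    have hmem : ∀ i : {i : Fin n // μfun i = c}, b i.1 ∈ f.eigenspace c := fun i =>
      Module.End.mem_eigenspace_iff.2 (by rw [hfb, i.2])
    have hli : LinearIndependent K
        (fun i : {i : Fin n // μfun i = c} => (⟨b i.1, hmem i⟩ : f.eigenspace c)) := by
      apply LinearIndependent.of_comp (f.eigenspace c).subtype
      have hco : ((f.eigenspace c).subtype ∘
          fun i : {i : Fin n // μfun i = c} => (⟨b i.1, hmem i⟩ : f.eigenspace c))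
          = b ∘ Subtype.val := rfl
      rw [hco]
      exact b.linearIndependent.comp _ Subtype.val_injective
    have hcard := hli.fintype_card_le_finrank
    rwa [Fintype.card_subtype] at hcard
  have hfinal : ∑ c ∈ s, a c ^ 2 ≤ ∑ c ∈ s, Module.finrank K (f.eigenspace c) ^ 2 :=
    Finset.sum_le_sum fun c _ => Nat.pow_le_pow_left (hac c) 2
  calc 2 * Module.finrank K (Module.End.eigenspace (exteriorPower.mapInduced 2 f) t)
      ≤ 2 * (Finset.univ.filter fun p : P => lam p = t).card :=
        Nat.mul_le_mul_left 2 hdim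
    _ = 2 * P₁.card := by rw [hc1]
    _ ≤ R.card := h2N
    _ = ∑ c ∈ s, a c * a (c⁻¹ * t) := hRsum
    _ ≤ ∑ c ∈ s, a c ^ 2 := hprod
    _ ≤ ∑ c ∈ s, Module.finrank K (f.eigenspace c) ^ 2 := hfinal
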